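/- The stabilisers in G of the projective points [0,1,1,0] and [1,1,0,1] coincide and equal H2 = {M(r; 0, 1 + r^(ω+1)) : r ∈ F^*}; the map r ↦ M(r; 0, 1 + r^(ω+1)) is a group isomorphism from F^* onto H2 (in particular M(r;0,1+r^(ω+1))·M(s;0,1+s^(ω+1)) = M(rs; 0, 1+(rs)^(ω+1)) for all r, s ∈ F^*); and H2 acts regularly on each of the sets {[1,1,0,z+1] : z ∈ F^*} and {[1,z+1,z,1] : z ∈ F^*}, where in particular [1,z+1,z,1]·M(r;0,1+r^(ω+1)) = [1, zr+1, zr, 1] for all z, r ∈ F^*. -/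

import Mathlib

open Matrix

noncomputable section

abbrev F (n : ℕ) : Type := GaloisField 2 (2 * n + 1)

def om (n : ℕ) : ℕ := 2 ^ (n + 1)

def ff (n : ℕ) (x y : F n) : F n := x ^ (om n + 2) + x * y + y ^ om n

def Mmat (n : ℕ) (r a b : F n) : Matrix (Fin 4) (Fin 4) (F n) :=
  !![1, ff n a b, a, b;
     0, r ^ (om n + 2), 0, 0;
     0, (a ^ (om n + 1) + b) * r, r, a ^ om n * r;
     0, a * r ^ (om n + 1), 0, r ^ (om n + 1)]


lemma htwo (n : ℕ) : (2 : F n) = 0 := by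
  exact_mod_cast CharP.cast_eq_zero (F n) 2

lemma Fpow_card (n : ℕ) (x : F n) : x ^ (2 ^ (2 * n + 1)) = x := by
  have : Fintype (F n) := Fintype.ofFinite _
  have h := FiniteField.pow_card x
  have hc : Fintype.card (F n) = 2 ^ (2 * n + 1) := by
    rw [← Nat.card_eq_fintype_card, GaloisField.card 2 (2*n+1) (by omega)]
  rwa [hc] at h

lemma pow_omsq (n : ℕ) (x : F n) : x ^ (om n * om n) = x ^ 2 := by
  have h : om n * om n = 2 ^ (2*n+1) * 2 := by
    simp [om, ← pow_add, ← pow_succ]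
    ring
  rw [h, pow_mul, Fpow_card]

lemma key1 (n : ℕ) (r : F n) : (1 + r ^ (om n + 1)) ^ om n = 1 + r ^ (om n + 2) := by
  rw [om, add_pow_char_pow, one_pow, ← pow_mul, ← om]
  congr 1
  have : (om n + 1) * om n = om n * om n + om n := by ring
  rw [this, pow_add, pow_omsq]
  ring

lemma vecMul_Mmat (n : ℕ) (v : Fin 4 → F n) (r a b : F n) :
    v ᵥ* Mmat n r a b =
      ![v 0,
        v 0 * ff n a b + v 1 * r ^ (om n + 2) + v 2 * ((a ^ (om n + 1) + b) * r) +
          v 3 * (a * r ^ (om n + 1)),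
        v 0 * a + v 2 * r,
        v 0 * b + v 2 * (a ^ om n * r) + v 3 * r ^ (om n + 1)] := by
  ext i
  fin_cases i <;>
    simp [Mmat, vecMul, dotProduct, Fin.sum_univ_four, vecHead, vecTail] <;> ring

lemma om_pos (n : ℕ) : 1 ≤ om n := Nat.one_le_two_pow

lemma pow_mul_id (n : ℕ) {x : F n} (hx : x ≠ 0) : x ^ ((om n + 1) * (om n - 1)) = x := by
  have he : (om n + 1) * (om n - 1) + 1 = om n * om n := by
    obtain ⟨k, hk⟩ : ∃ k, om n = k + 1 := ⟨om n - 1, by have := om_pos n; omega⟩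
    rw [hk, Nat.add_sub_cancel]; ring
  have h2 : x ^ ((om n + 1) * (om n - 1)) * x = x * x := by
    rw [← pow_succ, he, pow_omsq]; ring
  exact mul_right_cancel₀ hx h2

lemma pow_omp1_inj (n : ℕ) {r s : F n} (hr : r ≠ 0) (hs : s ≠ 0)
    (h : r ^ (om n + 1) = s ^ (om n + 1)) : r = s := by
  calc r = (r ^ (om n + 1)) ^ (om n - 1) := by rw [← pow_mul, pow_mul_id n hr]
    _ = (s ^ (om n + 1)) ^ (om n - 1) := by rw [h]
    _ = s := by rw [← pow_mul, pow_mul_id n hs]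

lemma pow_omp1_surj (n : ℕ) {c : F n} (hc : c ≠ 0) : (c ^ (om n - 1)) ^ (om n + 1) = c := by
  rw [← pow_mul, show (om n - 1) * (om n + 1) = (om n + 1) * (om n - 1) from Nat.mul_comm _ _, pow_mul_id n hc]

/-- The stabiliser in `G` of the projective point `[v]`:
elements of `G` mapping `v` to a nonzero scalar multiple of itself. -/
def stab (n : ℕ) (v : Fin 4 → F n) : Set (Matrix (Fin 4) (Fin 4) (F n)) :=
  {A | (∃ r a b : F n, r ≠ 0 ∧ A = Mmat n r a b) ∧ ∃ t : F n, t ≠ 0 ∧ v ᵥ* A = t • v}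


lemma stab_eq1 (n : ℕ) :
    stab n ![0, 1, 1, 0] =
      {A | ∃ r : F n, r ≠ 0 ∧ A = Mmat n r 0 (1 + r ^ (om n + 1))} := by
  ext A
  constructor
  · rintro ⟨⟨r, a, b, hr, rfl⟩, t, ht, hv⟩
    rw [vecMul_Mmat] at hv
    have h1 := congrFun hv 1
    have h2 := congrFun hv 2
    have h3 := congrFun hv 3
    simp at h1 h2 h3
    have ha : a = 0 := by
      rcases h3 with ⟨h, _⟩ | h
      · exact h
      · exact absurd h hr
    subst ha
    refine ⟨r, hr, ?_⟩
    have hb : b = 1 + r ^ (om n + 1) := by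
      have ht2 : (2 : F n) = 0 := htwo n
      refine mul_right_cancel₀ hr ?_
      simp at h1
      rw [← h2] at h1
      linear_combination h1 - r ^ (om n + 2) * ht2
    rw [hb]
  · rintro ⟨r, hr, rfl⟩
    refine ⟨⟨r, 0, _, hr, rfl⟩, r, hr, ?_⟩
    rw [vecMul_Mmat]
    have ht2 : (2 : F n) = 0 := htwo n
    have hz : (0 : F n) ^ om n = 0 := zero_pow (by have := om_pos n; omega)
    ext i
    fin_cases i <;> simp [ff, hz] <;>
      first
        | rfl
        | linear_combination r ^ (om n + 2) * ht2

lemma stab_eq2 (n : ℕ) :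
    stab n ![1, 1, 0, 1] =
      {A | ∃ r : F n, r ≠ 0 ∧ A = Mmat n r 0 (1 + r ^ (om n + 1))} := by
  have ht2 : (2 : F n) = 0 := htwo n
  have hz : (0 : F n) ^ om n = 0 := zero_pow (by have := om_pos n; omega)
  ext A
  constructor
  · rintro ⟨⟨r, a, b, hr, rfl⟩, t, ht, hv⟩
    rw [vecMul_Mmat] at hv
    have h0 := congrFun hv 0
    have h2 := congrFun hv 2
    have h3 := congrFun hv 3
    simp at h0 h2 h3
    -- h0 : 1 = t (or t = 1), h2 : a = 0, h3 : b + ... = t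
    refine ⟨r, hr, ?_⟩
    have ha : a = 0 := h2
    subst ha
    have hb : b = 1 + r ^ (om n + 1) := by
      rw [← h0] at h3
      linear_combination h3 - r ^ (om n + 1) * ht2
    rw [hb]
  · rintro ⟨r, hr, rfl⟩
    refine ⟨⟨r, 0, _, hr, rfl⟩, 1, one_ne_zero, ?_⟩
    rw [vecMul_Mmat]
    ext i
    fin_cases i <;> simp [ff, hz, key1] <;>
      first
        | rfl
        | linear_combination r ^ (om n + 2) * ht2
        | linear_combination r ^ (om n + 1) * ht2

lemma Mmul (n : ℕ) (r s : F n) :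
    Mmat n r 0 (1 + r ^ (om n + 1)) * Mmat n s 0 (1 + s ^ (om n + 1)) =
      Mmat n (r * s) 0 (1 + (r * s) ^ (om n + 1)) := by
  have ht2 : (2 : F n) = 0 := htwo n
  have hz : (0 : F n) ^ om n = 0 := zero_pow (by have := om_pos n; omega)
  ext i j
  fin_cases i <;> fin_cases j <;>
    simp [Mmat, ff, hz, key1, Matrix.mul_apply, Fin.sum_univ_four, vecHead, vecTail] <;>
      first
        | rfl
        | (ring_nf; try simp [ht2]; try ring)

lemma act_row (n : ℕ) (z r : F n) :
    (![1, z + 1, z, 1] : Fin 4 → F n) ᵥ* Mmat n r 0 (1 + r ^ (om n + 1)) =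
      ![1, z * r + 1, z * r, 1] := by
  have ht2 : (2 : F n) = 0 := htwo n
  have hz : (0 : F n) ^ om n = 0 := zero_pow (by have := om_pos n; omega)
  rw [vecMul_Mmat]
  ext i
  fin_cases i <;> simp [ff, hz, key1, vecHead, vecTail] <;>
    first
      | rfl
      | (ring_nf; try simp [ht2]; try ring)

lemma act_col (n : ℕ) (z r : F n) :
    (![1, 1, 0, z + 1] : Fin 4 → F n) ᵥ* Mmat n r 0 (1 + r ^ (om n + 1)) =
      ![1, 1, 0, 1 + z * r ^ (om n + 1)] := by
  have ht2 : (2 : F n) = 0 := htwo n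
  have hz : (0 : F n) ^ om n = 0 := zero_pow (by have := om_pos n; omega)
  rw [vecMul_Mmat]
  ext i
  fin_cases i <;> simp [ff, hz, key1, vecHead, vecTail] <;>
    first
      | rfl
      | (ring_nf; try simp [ht2]; try ring)


theorem stabiliser_H2 (n : ℕ) (hn : 1 ≤ n) :
    stab n ![0, 1, 1, 0] = stab n ![1, 1, 0, 1] ∧
    stab n ![0, 1, 1, 0] =
      {A | ∃ r : F n, r ≠ 0 ∧ A = Mmat n r 0 (1 + r ^ (om n + 1))} ∧
    (∀ r s : F n, r ≠ 0 → s ≠ 0 →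
      Mmat n r 0 (1 + r ^ (om n + 1)) * Mmat n s 0 (1 + s ^ (om n + 1)) =
        Mmat n (r * s) 0 (1 + (r * s) ^ (om n + 1))) ∧
    (∀ r s : F n, r ≠ 0 → s ≠ 0 →
      Mmat n r 0 (1 + r ^ (om n + 1)) = Mmat n s 0 (1 + s ^ (om n + 1)) → r = s) ∧
    (∀ z r : F n, z ≠ 0 → r ≠ 0 → ∃ t : F n, t ≠ 0 ∧
      (![1, z + 1, z, 1] : Fin 4 → F n) ᵥ* Mmat n r 0 (1 + r ^ (om n + 1)) =
        t • ![1, z * r + 1, z * r, 1]) ∧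
    (∀ z z' : F n, z ≠ 0 → z' ≠ 0 → ∃! r : F n, r ≠ 0 ∧ ∃ t : F n, t ≠ 0 ∧
      (![1, 1, 0, z + 1] : Fin 4 → F n) ᵥ* Mmat n r 0 (1 + r ^ (om n + 1)) =
        t • ![1, 1, 0, z' + 1]) ∧
    (∀ z z' : F n, z ≠ 0 → z' ≠ 0 → ∃! r : F n, r ≠ 0 ∧ ∃ t : F n, t ≠ 0 ∧
      (![1, z + 1, z, 1] : Fin 4 → F n) ᵥ* Mmat n r 0 (1 + r ^ (om n + 1)) =
        t • ![1, z' + 1, z', 1]) := by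
  refine ⟨(stab_eq1 n).trans (stab_eq2 n).symm, stab_eq1 n, fun r s _ _ => Mmul n r s,
    ?_, ?_, ?_, ?_⟩
  · -- injectivity
    intro r s hr hs h
    have := congrFun (congrFun h 2) 2
    simpa [Mmat] using this
  · -- action formula
    intro z r hz hr
    exact ⟨1, one_ne_zero, by rw [act_row, one_smul]⟩
  · -- regularity on [1,1,0,z+1]
    intro z z' hz hz'
    have hc : z' * z⁻¹ ≠ 0 := mul_ne_zero hz' (inv_ne_zero hz)
    set c := z' * z⁻¹ with hcdef
    refine ⟨c ^ (om n - 1), ⟨pow_ne_zero _ hc, 1, one_ne_zero, ?_⟩, ?_⟩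
    · rw [act_col, pow_omp1_surj n hc, one_smul]
      have h : z * c = z' := by rw [hcdef]; field_simp
      rw [h]
      ext i
      fin_cases i <;> simp [add_comm]
    · rintro r' ⟨hr', t, ht, hv⟩
      rw [act_col] at hv
      have h0 := congrFun hv 0
      have h3 := congrFun hv 3
      simp at h0 h3
      rw [← h0, one_mul] at h3
      have hx : r' ^ (om n + 1) = c := by
        have hzx : z * r' ^ (om n + 1) = z' := by linear_combination h3
        rw [hcdef, eq_mul_inv_iff_mul_eq₀ hz]
        linear_combination hzx
      refine pow_omp1_inj n hr' (pow_ne_zero _ hc) ?_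
      rw [hx, pow_omp1_surj n hc]
  · -- regularity on [1,z+1,z,1]
    intro z z' hz hz'
    have hc : z' * z⁻¹ ≠ 0 := mul_ne_zero hz' (inv_ne_zero hz)
    refine ⟨z' * z⁻¹, ⟨hc, 1, one_ne_zero, ?_⟩, ?_⟩
    · rw [act_row, one_smul]
      have : z * (z' * z⁻¹) = z' := by field_simp
      rw [this]
    · rintro r' ⟨hr', t, ht, hv⟩
      rw [act_row] at hv
      have h0 := congrFun hv 0
      have h2 := congrFun hv 2
      simp at h0 h2
      rw [← h0, one_mul] at h2
      field_simp
      linear_combination h2
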